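/- arXiv:2412.15769 — 3 statements merged into one kernel-verified Lean document; each statement's English description precedes it below -/
import Mathlib

section
/- Let m ≥ 3, and let u_E, u₁,…,u_m ∈ ℤ³ all have last coordinate 1. Suppose for each j (indices mod m) there exist integers a_j, b_j with u_{j−1} + u_{j+1} + a_j u_j + b_j u_E = 0 and a_j + b_j = −2. Given real numbers w_E, w₁,…,w_m, define t_j = w_{j−1} + w_{j+1} + a_j w_j + b_j w_E. Then ∑_{j=1}^{m} t_j (u_j − u_E) = 0. -/
/-- Closing lemma: with height-1 vectors `u_E, u₁,…,u_m ∈ ℤ³` satisfying the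
quadrilateral relations `u_{j-1} + u_{j+1} + a_j u_j + b_j u_E = 0`, `a_j + b_j = -2`
(indices mod `m`), and `t_j = w_{j-1} + w_{j+1} + a_j w_j + b_j w_E`, one has
`∑ t_j (u_j − u_E) = 0`. -/
theorem sum_t_smul_eq_zero (m : ℕ) [NeZero m] (hm : 3 ≤ m)
    (uE : Fin 3 → ℤ) (u : ZMod m → Fin 3 → ℤ) (a b : ZMod m → ℤ)
    (huE : uE 2 = 1) (hu : ∀ j, u j 2 = 1)
    (hrel : ∀ j, u (j - 1) + u (j + 1) + a j • u j + b j • uE = 0)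
    (hab : ∀ j, a j + b j = -2)
    (wE : ℝ) (w : ZMod m → ℝ) (t : ZMod m → ℝ)
    (ht : ∀ j, t j = w (j - 1) + w (j + 1) + (a j : ℝ) * w j + (b j : ℝ) * wE) :
    ∑ j : ZMod m, t j • ((fun i => (u j i : ℝ)) - fun i => (uE i : ℝ)) = 0 := by
  classical
  set V : ZMod m → Fin 3 → ℝ := fun j => (fun i => (u j i : ℝ)) - fun i => (uE i : ℝ) with hV
  have key : ∀ j, V (j - 1) + V (j + 1) + (a j : ℝ) • V j = 0 := by
    intro j
    funext i
    have h1 : (u (j-1) i : ℝ) + u (j+1) i + (a j : ℝ) * u j i + (b j : ℝ) * uE i = 0 := by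
      have := congrFun (hrel j) i
      simp only [Pi.add_apply, Pi.smul_apply, smul_eq_mul, Pi.zero_apply] at this
      exact_mod_cast this
    have h2 : (a j : ℝ) + (b j : ℝ) = -2 := by exact_mod_cast hab j
    simp only [hV, Pi.add_apply, Pi.sub_apply, Pi.smul_apply, smul_eq_mul, Pi.zero_apply]
    linear_combination h1 - (uE i : ℝ) * h2
  have shift_sub : ∀ (f : ZMod m → Fin 3 → ℝ), ∑ j, f (j - 1) = ∑ j, f j := fun f =>
    Equiv.sum_comp (Equiv.subRight (1 : ZMod m)) f
  have shift_add : ∀ (f : ZMod m → Fin 3 → ℝ), ∑ j, f (j + 1) = ∑ j, f j := fun f =>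
    Equiv.sum_comp (Equiv.addRight (1 : ZMod m)) f
  have hsum2 : ((∑ j, V j) + ∑ j, V j) + ∑ j, (a j : ℝ) • V j = 0 := by
    have hsum : ∑ j, (V (j - 1) + V (j + 1) + (a j : ℝ) • V j) = 0 := by
      simp only [key]; simp
    rw [Finset.sum_add_distrib, Finset.sum_add_distrib, shift_sub V, shift_add V] at hsum
    exact hsum
  have hAeq : ∑ j, (a j : ℝ) • V j = -((∑ j, V j) + ∑ j, V j) :=
    eq_neg_of_add_eq_zero_right hsum2
  have hB : ∑ j, (b j : ℝ) • V j = 0 := by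
    have hb : ∀ j, (b j : ℝ) = -2 - (a j : ℝ) := by
      intro j
      have h2 : (a j : ℝ) + (b j : ℝ) = -2 := by exact_mod_cast hab j
      linarith
    calc ∑ j, (b j : ℝ) • V j = ∑ j, ((-2 - (a j : ℝ)) • V j) := by simp_rw [hb]
      _ = ∑ j, ((-2 : ℝ) • V j) - ∑ j, (a j : ℝ) • V j := by
          simp [sub_smul, Finset.sum_sub_distrib]
      _ = 0 := by
          rw [← Finset.smul_sum, hAeq]
          module
  calc ∑ j, t j • V j
      = ∑ j, (w (j - 1) • V j + w (j + 1) • V j + ((a j : ℝ) * w j) • V j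
          + ((b j : ℝ) * wE) • V j) := by
        refine Finset.sum_congr rfl fun j _ => ?_
        rw [ht j]; module
    _ = (∑ j, w (j - 1) • V j) + (∑ j, w (j + 1) • V j)
          + (∑ j, ((a j : ℝ) * w j) • V j) + ∑ j, ((b j : ℝ) * wE) • V j := by
        simp [Finset.sum_add_distrib]
    _ = (∑ j, w j • V (j + 1)) + (∑ j, w j • V (j - 1))
          + (∑ j, w j • ((a j : ℝ) • V j)) + wE • ∑ j, (b j : ℝ) • V j := by
        rw [← shift_add (fun j => w (j - 1) • V j), ← shift_sub (fun j => w (j + 1) • V j),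
          Finset.smul_sum]
        congr 1
        · congr 1
          · congr 1
            · refine Finset.sum_congr rfl fun j _ => ?_
              simp
            · refine Finset.sum_congr rfl fun j _ => ?_
              simp
          · refine Finset.sum_congr rfl fun j _ => ?_
            rw [mul_smul]; exact smul_comm _ _ _
        · refine Finset.sum_congr rfl fun j _ => ?_
          rw [smul_comm, ← mul_smul]
    _ = ∑ j, w j • (V (j - 1) + V (j + 1) + (a j : ℝ) • V j) + wE • ∑ j, (b j : ℝ) • V j := by
        rw [← Finset.sum_add_distrib, ← Finset.sum_add_distrib]
        refine congrArg (· + _) (Finset.sum_congr rfl fun j _ => ?_)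
        rw [smul_add, smul_add]
        abel
    _ = 0 := by
        rw [hB]
        simp [key]
end

section
/- Let m ≥ 3 and suppose u_E, u₁,…,u_m ∈ ℤ³ have last coordinate 1 and satisfy the relations u_{j−1}+u_{j+1}+a_j u_j + b_j u_E = 0 with a_j + b_j = −2 (indices mod m). Regard the differences u_j − u_E as vectors in ℤ² (first two coordinates) and let J₂ be rotation by 90°, J₂(x,y) = (−y,x). Given w's and t_j = w_{j−1}+w_{j+1}+a_j w_j + b_j w_E, define points p₀ ∈ ℝ² arbitrary and p_j = p_{j−1} + t_j J₂(u_j − u_E). Then p_m = p₀, i.e. the polygon closes. -/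
lemma cyc_key {m : ℕ} [NeZero m] (a b : ZMod m → ℝ) (wE : ℝ) (w : ZMod m → ℝ)
    (U : ZMod m → ℝ) (UE : ℝ)
    (hrelR : ∀ j, U (j - 1) + U (j + 1) + a j * U j + b j * UE = 0)
    (hab : ∀ j, a j + b j = -2) :
    ∑ j : ZMod m, (w (j - 1) + w (j + 1) + a j * w j + b j * wE) * (U j - UE) = 0 := by
  have e1 : ∑ j : ZMod m, w (j - 1) * (U j - UE) = ∑ j : ZMod m, w j * (U (j + 1) - UE) :=
    (Fintype.sum_equiv (Equiv.addRight 1) _ _ (fun j => by simp)).symm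
  have e2 : ∑ j : ZMod m, w (j + 1) * (U j - UE) = ∑ j : ZMod m, w j * (U (j - 1) - UE) :=
    (Fintype.sum_equiv (Equiv.subRight 1) _ _ (fun j => by simp)).symm
  have s1 : ∑ j : ZMod m, U (j - 1) = ∑ j : ZMod m, U j :=
    Fintype.sum_equiv (Equiv.subRight 1) _ _ (fun j => rfl)
  have s2 : ∑ j : ZMod m, U (j + 1) = ∑ j : ZMod m, U j :=
    Fintype.sum_equiv (Equiv.addRight 1) _ _ (fun j => rfl)
  calc ∑ j : ZMod m, (w (j - 1) + w (j + 1) + a j * w j + b j * wE) * (U j - UE)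
      = (∑ j : ZMod m, w (j - 1) * (U j - UE)) + (∑ j : ZMod m, w (j + 1) * (U j - UE))
        + (∑ j : ZMod m, a j * w j * (U j - UE)) + wE * ∑ j : ZMod m, b j * (U j - UE) := by
        rw [Finset.mul_sum, ← Finset.sum_add_distrib, ← Finset.sum_add_distrib,
          ← Finset.sum_add_distrib]
        exact Finset.sum_congr rfl (fun j _ => by ring)
    _ = (∑ j : ZMod m, w j * ((U (j + 1) - UE) + (U (j - 1) - UE) + a j * (U j - UE)))
        + wE * ∑ j : ZMod m, b j * (U j - UE) := by
        rw [e1, e2, ← Finset.sum_add_distrib, ← Finset.sum_add_distrib]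
        congr 1
        exact Finset.sum_congr rfl (fun j _ => by ring)
    _ = (∑ j : ZMod m, (0 : ℝ))
        + wE * ∑ j : ZMod m, (U (j - 1) + U (j + 1) - 2 * U j) := by
        congr 1
        · exact Finset.sum_congr rfl fun j _ => by
            linear_combination w j * hrelR j - w j * UE * hab j
        · congr 1
          exact Finset.sum_congr rfl fun j _ => by
            linear_combination (-1 : ℝ) * hrelR j + U j * hab j
    _ = 0 := by
        have : ∑ j : ZMod m, (U (j - 1) + U (j + 1) - 2 * U j) = 0 := by
          rw [Finset.sum_sub_distrib, Finset.sum_add_distrib, s1, s2, ← Finset.mul_sum]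
          ring
        simp [this]


/-- Rotation by 90° on `ℝ²`. -/
def J2 (v : ℝ × ℝ) : ℝ × ℝ := (-v.2, v.1)

/-- Projection `ℤ³ → ℝ²` onto the first two coordinates. -/
def ubar (v : Fin 3 → ℤ) : ℝ × ℝ := ((v 0 : ℝ), (v 1 : ℝ))

/-- Proposition 3.3: the moment polygon closes. With the quadrilateral relations
around an interior ray and `t_j = w_{j-1}+w_{j+1}+a_j w_j+b_j w_E`, the points
`p_j = p_{j-1} + t_j J₂(ū_j − ū_E)` satisfy `p_m = p₀`. -/
theorem moment_polygon_closes (m : ℕ) [NeZero m] (hm : 3 ≤ m)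
    (uE : Fin 3 → ℤ) (u : ZMod m → Fin 3 → ℤ) (a b : ZMod m → ℤ)
    (huE : uE 2 = 1) (hu : ∀ j, u j 2 = 1)
    (hrel : ∀ j, u (j - 1) + u (j + 1) + a j • u j + b j • uE = 0)
    (hab : ∀ j, a j + b j = -2)
    (wE : ℝ) (w : ZMod m → ℝ) (t : ZMod m → ℝ)
    (ht : ∀ j, t j = w (j - 1) + w (j + 1) + (a j : ℝ) * w j + (b j : ℝ) * wE)
    (p : ℕ → ℝ × ℝ)
    (hp : ∀ j : ℕ, j < m →
      p (j + 1) = p j + t ((j : ZMod m) + 1) • J2 (ubar (u ((j : ZMod m) + 1)) - ubar uE)) :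
    p m = p 0 := by
  -- per-coordinate weighted sums vanish
  have keySum : ∀ k : Fin 3, ∑ x : ZMod m, t x * (((u x k : ℝ)) - (uE k : ℝ)) = 0 := by
    intro k
    have hrelR : ∀ j : ZMod m,
        ((u (j - 1) k : ℝ)) + (u (j + 1) k : ℝ) + (a j : ℝ) * (u j k : ℝ)
          + (b j : ℝ) * (uE k : ℝ) = 0 := by
      intro j
      have h := congrFun (hrel j) k
      simp only [Pi.add_apply, Pi.smul_apply, smul_eq_mul, Pi.zero_apply] at h
      exact_mod_cast h
    have habR : ∀ j : ZMod m, (a j : ℝ) + (b j : ℝ) = -2 := by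
      intro j; exact_mod_cast congrArg (Int.cast : ℤ → ℝ) (hab j)
    calc ∑ x : ZMod m, t x * (((u x k : ℝ)) - (uE k : ℝ))
        = ∑ x : ZMod m, (w (x - 1) + w (x + 1) + (a x : ℝ) * w x + (b x : ℝ) * wE)
            * (((u x k : ℝ)) - (uE k : ℝ)) :=
          Finset.sum_congr rfl fun x _ => by rw [ht x]
      _ = 0 := cyc_key _ _ wE w _ _ hrelR habR
  -- the increments sum to zero over a full cycle
  have hzero : ∑ x : ZMod m, t x • J2 (ubar (u x) - ubar uE) = 0 := by
    rw [Prod.ext_iff]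
    constructor
    · rw [Prod.fst_sum, Prod.fst_zero]
      calc ∑ x : ZMod m, (t x • J2 (ubar (u x) - ubar uE)).1
          = ∑ x : ZMod m, -(t x * (((u x 1 : ℝ)) - (uE 1 : ℝ))) :=
            Finset.sum_congr rfl fun x _ => by simp [J2, ubar]; ring
        _ = 0 := by rw [Finset.sum_neg_distrib, keySum 1, neg_zero]
    · rw [Prod.snd_sum, Prod.snd_zero]
      calc ∑ x : ZMod m, (t x • J2 (ubar (u x) - ubar uE)).2
          = ∑ x : ZMod m, t x * (((u x 0 : ℝ)) - (uE 0 : ℝ)) :=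
            Finset.sum_congr rfl fun x _ => by simp [J2, ubar]
        _ = 0 := keySum 0
  -- reindex range m sum to a sum over ZMod m
  have hbij : ∀ f : ZMod m → ℝ × ℝ,
      ∑ j ∈ Finset.range m, f ((j : ZMod m) + 1) = ∑ x : ZMod m, f x := by
    intro f
    refine Finset.sum_nbij' (fun j => ((j : ZMod m) + 1)) (fun x => (x - 1).val)
      (fun j _ => Finset.mem_univ _) (fun x _ => Finset.mem_range.2 (ZMod.val_lt _))
      ?_ ?_ (fun j _ => rfl)
    · intro j hj
      simp only [add_sub_cancel_right]
      exact ZMod.val_natCast_of_lt (Finset.mem_range.1 hj)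
    · intro x hx
      simp [ZMod.natCast_val, ZMod.cast_id, sub_add_cancel]
  -- partial sums
  have hstep : ∀ n : ℕ, n ≤ m → p n = p 0 +
      ∑ j ∈ Finset.range n, t ((j : ZMod m) + 1) • J2 (ubar (u ((j : ZMod m) + 1)) - ubar uE) := by
    intro n
    induction n with
    | zero => intro _; simp
    | succ k ih =>
      intro hk
      rw [hp k (Nat.lt_of_succ_le hk), ih (Nat.le_of_succ_le hk), Finset.sum_range_succ,
        add_assoc]
  rw [hstep m le_rfl, hbij (fun x => t x • J2 (ubar (u x) - ubar uE)), hzero, add_zero]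
end

section
/- In the ℤ/3ℤ conifold quotient example with f₁ = −f₂ = f₃ and p₁ = (0,0), λ(p₁) = (0,0), the increments λ(p₂)−λ(p₁) = f₂(3,2), λ(p₃)−λ(p₁) = (f₁+f₂)(1,1) = (0,0), λ(p₆)−λ(p₂) = −(f₂+f₃)(2,1) = (0,0) hold, and the resulting heights satisfy ν₃(p₂) = ν₃(p₁), ν₃(p₃) = ν₃(p₁), and ν₃(p₆) − ν₃(p₂) = f₂(w₂+w₃). In particular, if f₂ ≠ 0 and w₂ + w₃ ≠ 0, then ν₃(p₆) ≠ ν₃(p₂), so the lifted graph is non-planar. -/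
/-- In the ℤ/3ℤ conifold quotient example with `f₁ = −f₂ = f₃`, the lifting
functions satisfy `λ(p₃) = λ(p₁)`, `λ(p₆) = λ(p₂)`, the heights satisfy
`ν₃(p₂) = ν₃(p₁)`, `ν₃(p₃) = ν₃(p₁)`, `ν₃(p₆) − ν₃(p₂) = f₂(w₂+w₃)`; hence if
`f₂ ≠ 0` and `w₂ + w₃ ≠ 0` the lifted graph is non-planar. -/
theorem conifold_quotient_lift (f₁ f₂ f₃ w₁ w₂ w₃ : ℝ)
    (hf₁ : f₁ = -f₂) (hf₃ : f₃ = -f₂) :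
    let lam₁ : ℝ × ℝ := (0, 0)
    let lam₂ : ℝ × ℝ := lam₁ + f₂ • ((3 : ℝ), (2 : ℝ))
    let lam₃ : ℝ × ℝ := lam₁ + (f₁ + f₂) • ((1 : ℝ), (1 : ℝ))
    let lam₆ : ℝ × ℝ := lam₂ + (-(f₂ + f₃)) • ((2 : ℝ), (1 : ℝ))
    let n₁ : ℝ := 0
    let n₂ : ℝ := n₁ + (-w₂) * (2 * lam₂.1 + (-3) * lam₂.2)
    let n₃ : ℝ := n₁ + (-(w₁ + w₂)) * (1 * lam₃.1 + (-1) * lam₃.2)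
    let n₆ : ℝ := n₂ + (-(w₂ + w₃)) * (1 * lam₆.1 + (-2) * lam₆.2)
    lam₂ - lam₁ = f₂ • ((3 : ℝ), (2 : ℝ)) ∧
      lam₃ - lam₁ = (0, 0) ∧ lam₆ - lam₂ = (0, 0) ∧
      n₂ = n₁ ∧ n₃ = n₁ ∧ n₆ - n₂ = f₂ * (w₂ + w₃) ∧
      (f₂ ≠ 0 → w₂ + w₃ ≠ 0 → n₆ ≠ n₂) := by
  subst hf₁ hf₃
  simp only [Prod.smul_mk, Prod.mk_add_mk, Prod.mk_sub_mk, smul_eq_mul, Prod.mk.injEq]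
  refine ⟨⟨by ring, by ring⟩, ⟨by ring, by ring⟩, ⟨by ring, by ring⟩, by ring, by ring,
    by ring, fun h2 h3 h => ?_⟩
  have : f₂ * (w₂ + w₃) ≠ 0 := mul_ne_zero h2 h3
  apply this; nlinarith [h]
end
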